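/- Every non-empty finite language over a finite alphabet is the language of some deterministic (one-unambiguous) regular expression. -/

import Mathlib

open Computability

/-- Regular expressions (with explicit parentheses) built from ∅, ε, letters,
concatenation, union, optional `?` and one-or-more `⁺`. -/
inductive PRE (α : Type) where
  | empty : PRE α
  | eps : PRE α
  | char : α → PRE α
  | paren : PRE α → PRE α
  | cat : PRE α → PRE α → PRE α
  | alt : PRE α → PRE α → PRE α
  | opt : PRE α → PRE α
  | pos : PRE α → PRE α

/-- The language of a regular expression. -/
def PRE.lang {α : Type} : PRE α → Language α
  | .empty => 0
  | .eps => 1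
  | .char a => {[a]}
  | .paren r => r.lang
  | .cat r s => r.lang * s.lang
  | .alt r s => r.lang + s.lang
  | .opt r => r.lang + 1
  | .pos r => r.lang * (r.lang)∗

/-- Replace the i-th occurrence of each letter `a` by the marked symbol `(a, i)`,
threading occurrence counters. -/
def PRE.markAux {α : Type} [DecidableEq α] : PRE α → (α → ℕ) → PRE (α × ℕ) × (α → ℕ)
  | .empty, c => (.empty, c)
  | .eps, c => (.eps, c)
  | .char a, c => (.char (a, c a + 1), fun b => if b = a then c a + 1 else c b)
  | .paren r, c => let p := r.markAux c; (.paren p.1, p.2)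
  | .cat r s, c => let p := r.markAux c; let q := s.markAux p.2; (.cat p.1 q.1, q.2)
  | .alt r s, c => let p := r.markAux c; let q := s.markAux p.2; (.alt p.1 q.1, q.2)
  | .opt r, c => let p := r.markAux c; (.opt p.1, p.2)
  | .pos r, c => let p := r.markAux c; (.pos p.1, p.2)

/-- The marked version r̄ of a regular expression. -/
def PRE.mark {α : Type} [DecidableEq α] (r : PRE α) : PRE (α × ℕ) :=
  (r.markAux fun _ => 0).1

/-- A regular expression is deterministic (one-unambiguous) if its marked version
admits no two words w·a⁽ⁱ⁾·v and w·a⁽ʲ⁾·v′ with i ≠ j. -/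
def PRE.Deterministic {α : Type} [DecidableEq α] (r : PRE α) : Prop :=
  ∀ (w v v' : List (α × ℕ)) (a : α) (i j : ℕ),
    w ++ (a, i) :: v ∈ r.mark.lang → w ++ (a, j) :: v' ∈ r.mark.lang → i = j

/-- Number of occurrences of the letter `a` in `r`. -/
def PRE.rep {α : Type} [DecidableEq α] : PRE α → α → ℕ
  | .empty, _ => 0
  | .eps, _ => 0
  | .char b, a => if b = a then 1 else 0
  | .paren r, a => r.rep a
  | .cat r s, a => r.rep a + s.rep a
  | .alt r s, a => r.rep a + s.rep a
  | .opt r, a => r.rep a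
  | .pos r, a => r.rep a

/-- `r` is a k-occurrence regular expression: every letter occurs at most `k` times. -/
def PRE.IsKORE {α : Type} [DecidableEq α] (k : ℕ) (r : PRE α) : Prop :=
  ∀ a, r.rep a ≤ k

/-- Length of the string representation (letters, ∅, ε, operators ·, +, ?, ⁺ and
parentheses each count as one character). -/
def PRE.len {α : Type} : PRE α → ℕ
  | .empty => 1
  | .eps => 1
  | .char _ => 1
  | .paren r => r.len + 2
  | .cat r s => r.len + s.len + 1
  | .alt r s => r.len + s.len + 1
  | .opt r => r.len + 1
  | .pos r => r.len + 1

section Aux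

open Computability

variable {α : Type} [DecidableEq α]

/-- Shift marks by a counter. -/
def shiftF (c : α → ℕ) (p : α × ℕ) : α × ℕ := (p.1, p.2 + c p.1)

lemma shiftF_injective (c : α → ℕ) : Function.Injective (shiftF c) := by
  rintro ⟨a, i⟩ ⟨b, j⟩ h
  simp only [shiftF, Prod.mk.injEq] at h
  obtain ⟨rfl, h2⟩ := h
  exact Prod.ext rfl (by omega)

lemma markAux_snd (r : PRE α) (c : α → ℕ) :
    (r.markAux c).2 = fun a => c a + r.rep a := by
  induction r generalizing c with
  | empty => funext a; simp [PRE.markAux, PRE.rep]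
  | eps => funext a; simp [PRE.markAux, PRE.rep]
  | char b =>
    funext a
    by_cases h : a = b
    · subst h; simp [PRE.markAux, PRE.rep]
    · have h2 : ¬ b = a := fun hh => h hh.symm
      simp [PRE.markAux, PRE.rep, h, h2]
  | paren r ih => funext a; simp [PRE.markAux, PRE.rep, ih]
  | cat r s ihr ihs =>
    funext a; simp [PRE.markAux, PRE.rep, ihr, ihs, Nat.add_assoc]
  | alt r s ihr ihs =>
    funext a; simp [PRE.markAux, PRE.rep, ihr, ihs, Nat.add_assoc]
  | opt r ih => funext a; simp [PRE.markAux, PRE.rep, ih]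
  | pos r ih => funext a; simp [PRE.markAux, PRE.rep, ih]

/-- Elementwise map of a language. -/
def mapL {β γ : Type} (g : β → γ) (L : Language β) : Language γ :=
  (List.map g) '' L

lemma mem_mapL {β γ : Type} {g : β → γ} {L : Language β} {x : List γ} :
    x ∈ mapL g L ↔ ∃ u ∈ L, List.map g u = x := Iff.rfl

lemma mapL_zero {β γ : Type} (g : β → γ) : mapL g (0 : Language β) = 0 := by
  ext x
  constructor
  · rintro ⟨u, hu, rfl⟩
    exact absurd hu (Language.notMem_zero u)
  · intro hx
    exact absurd hx (Language.notMem_zero x)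

lemma mapL_one {β γ : Type} (g : β → γ) : mapL g (1 : Language β) = 1 := by
  ext x
  simp only [mem_mapL, Language.mem_one]
  constructor
  · rintro ⟨u, rfl, rfl⟩; rfl
  · rintro rfl; exact ⟨[], rfl, rfl⟩

lemma mapL_add {β γ : Type} (g : β → γ) (A B : Language β) :
    mapL g (A + B) = mapL g A + mapL g B := by
  ext x
  simp only [mem_mapL, Language.mem_add]
  constructor
  · rintro ⟨u, hu | hu, rfl⟩
    · exact Or.inl ⟨u, hu, rfl⟩
    · exact Or.inr ⟨u, hu, rfl⟩
  · rintro (⟨u, hu, rfl⟩ | ⟨u, hu, rfl⟩)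
    · exact ⟨u, Or.inl hu, rfl⟩
    · exact ⟨u, Or.inr hu, rfl⟩

lemma mapL_mul {β γ : Type} (g : β → γ) (A B : Language β) :
    mapL g (A * B) = mapL g A * mapL g B := by
  ext x
  simp only [mem_mapL, Language.mem_mul]
  constructor
  · rintro ⟨u, hu, rfl⟩
    obtain ⟨a, ha, b, hb, rfl⟩ := Language.mem_mul.mp hu
    exact ⟨_, ⟨a, ha, rfl⟩, _, ⟨b, hb, rfl⟩, (List.map_append).symm⟩
  · rintro ⟨a, ⟨a0, ha0, rfl⟩, b, ⟨b0, hb0, rfl⟩, rfl⟩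
    exact ⟨a0 ++ b0, Language.append_mem_mul ha0 hb0, List.map_append⟩

lemma mapL_kstar {β γ : Type} (g : β → γ) (A : Language β) :
    mapL g (A∗) = (mapL g A)∗ := by
  ext x
  simp only [mem_mapL]
  constructor
  · rintro ⟨u, hu, rfl⟩
    obtain ⟨L, rfl, hL⟩ := Language.mem_kstar.mp hu
    rw [Language.mem_kstar]
    refine ⟨L.map (List.map g), by simp [List.map_flatten], ?_⟩
    intro y hy
    obtain ⟨z, hz, rfl⟩ := List.mem_map.mp hy
    exact ⟨z, hL z hz, rfl⟩
  · intro hx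
    obtain ⟨L, rfl, hL⟩ := Language.mem_kstar.mp hx
    choose f hf1 hf2 using fun (y : List γ) (hy : y ∈ L) => hL y hy
    refine ⟨(L.attach.map fun y => f y.1 y.2).flatten, ?_, ?_⟩
    · refine Language.mem_kstar.mpr ⟨L.attach.map fun y => f y.1 y.2, rfl, ?_⟩
      intro y hy
      obtain ⟨z, hz, rfl⟩ := List.mem_map.mp hy
      exact hf1 z.1 z.2
    · rw [List.map_flatten, List.map_map]
      have h1 : List.map (List.map g ∘ fun y => f y.1 y.2) L.attach
          = List.map Subtype.val L.attach :=
        List.map_congr_left (fun y _ => hf2 y.1 y.2)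
      rw [h1, List.attach_map_subtype_val]

lemma mapL_comp_shiftF (c d : α → ℕ) (L : Language (α × ℕ)) :
    mapL (shiftF c) (mapL (shiftF d) L) = mapL (shiftF fun a => c a + d a) L := by
  ext x
  simp only [mem_mapL]
  constructor
  · rintro ⟨u, ⟨u0, hu0, rfl⟩, rfl⟩
    refine ⟨u0, hu0, ?_⟩
    rw [List.map_map]
    refine List.map_congr_left ?_
    intro p _
    simp only [Function.comp_apply, shiftF]
    exact Prod.ext rfl (by omega)
  · rintro ⟨u, hu, rfl⟩
    refine ⟨List.map (shiftF d) u, ⟨u, hu, rfl⟩, ?_⟩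
    rw [List.map_map]
    refine List.map_congr_left ?_
    intro p _
    simp only [Function.comp_apply, shiftF]
    exact Prod.ext rfl (by omega)

lemma shiftF_eq (c d : α → ℕ) (h : ∀ a, c a = d a) : shiftF c = shiftF d := by
  funext p
  simp only [shiftF]
  rw [h]

lemma markAux_lang (r : PRE α) (c : α → ℕ) :
    ((r.markAux c).1).lang = mapL (shiftF c) (r.mark.lang) := by
  induction r generalizing c with
  | empty => simp [PRE.markAux, PRE.mark, PRE.lang, mapL_zero]
  | eps => simp [PRE.markAux, PRE.mark, PRE.lang, mapL_one]
  | char a =>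
    simp only [PRE.markAux, PRE.mark, PRE.lang]
    ext x
    constructor
    · intro hx
      have hx' : x = [(a, c a + 1)] := hx
      subst hx'
      exact ⟨[(a, 1)], rfl, by simp [shiftF, Nat.add_comm]⟩
    · rintro ⟨u, hu, rfl⟩
      have hu' : u = [(a, 1)] := hu
      subst hu'
      show List.map (shiftF c) [(a, 1)] = [(a, c a + 1)]
      simp [shiftF, Nat.add_comm]
  | paren r ih => simpa [PRE.markAux, PRE.mark, PRE.lang] using ih c
  | cat r s ihr ihs =>
    have key : ∀ c : α → ℕ,
        ((PRE.cat r s).markAux c).1.lang =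
          (r.markAux c).1.lang * (s.markAux (r.markAux c).2).1.lang := fun _ => rfl
    rw [PRE.mark, key, key, mapL_mul]
    congr 1
    · exact ihr c
    · have he : shiftF (r.markAux c).2
          = shiftF fun a => c a + (r.markAux fun _ => 0).2 a :=
        shiftF_eq _ _ (fun a => by simp only [markAux_snd]; omega)
      rw [ihs, ihs, mapL_comp_shiftF, he]
  | alt r s ihr ihs =>
    have key : ∀ c : α → ℕ,
        ((PRE.alt r s).markAux c).1.lang =
          (r.markAux c).1.lang + (s.markAux (r.markAux c).2).1.lang := fun _ => rfl
    rw [PRE.mark, key, key, mapL_add]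
    congr 1
    · exact ihr c
    · have he : shiftF (r.markAux c).2
          = shiftF fun a => c a + (r.markAux fun _ => 0).2 a :=
        shiftF_eq _ _ (fun a => by simp only [markAux_snd]; omega)
      rw [ihs, ihs, mapL_comp_shiftF, he]
  | opt r ih =>
    have key : ∀ c : α → ℕ,
        ((PRE.opt r).markAux c).1.lang = (r.markAux c).1.lang + 1 := fun _ => rfl
    rw [PRE.mark, key, key, mapL_add, mapL_one, ih c]
    rfl
  | pos r ih =>
    have key : ∀ c : α → ℕ,
        ((PRE.pos r).markAux c).1.lang =
          (r.markAux c).1.lang * ((r.markAux c).1.lang)∗ := fun _ => rfl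
    rw [PRE.mark, key, key, mapL_mul, mapL_kstar, ih c]
    rfl

/-- Determinism as a property of languages of marked words. -/
def DetL (L : Language (α × ℕ)) : Prop :=
  ∀ (w v v' : List (α × ℕ)) (a : α) (i j : ℕ),
    w ++ (a, i) :: v ∈ L → w ++ (a, j) :: v' ∈ L → i = j

lemma DetL_image {c : α → ℕ} {L : Language (α × ℕ)} (h : DetL L) :
    DetL (mapL (shiftF c) L) := by
  intro w v v' a i j h1 h2
  obtain ⟨u, hu, hmap⟩ := h1
  obtain ⟨u', hu', hmap'⟩ := h2
  rw [List.map_eq_append_iff] at hmap hmap'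
  obtain ⟨w1, t1, rfl, hw1, ht1⟩ := hmap
  obtain ⟨w1', t1', rfl, hw1', ht1'⟩ := hmap'
  rw [List.map_eq_cons_iff] at ht1 ht1'
  obtain ⟨x, t2, rfl, hx, -⟩ := ht1
  obtain ⟨x', t2', rfl, hx', -⟩ := ht1'
  have hww : w1 = w1' := List.map_injective_iff.mpr (shiftF_injective c) (hw1.trans hw1'.symm)
  subst hww
  obtain ⟨xa, xi⟩ := x
  obtain ⟨xa', xi'⟩ := x'
  simp only [shiftF, Prod.mk.injEq] at hx hx'
  have hi1 : xi + c xa = i := hx.2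
  have hj1 : xi' + c xa' = j := hx'.2
  have hxx : xa' = xa := hx'.1.trans hx.1.symm
  rw [hxx] at hu' hj1
  have hk : xi = xi' := h w1 t2 t2' xa xi xi' hu hu'
  omega

lemma DetL_add_one {L : Language (α × ℕ)} (h : DetL L) : DetL (L + 1) := by
  intro w v v' a i j h1 h2
  rw [Language.mem_add, Language.mem_one] at h1 h2
  rcases h1 with h1 | h1
  · rcases h2 with h2 | h2
    · exact h w v v' a i j h1 h2
    · exact absurd h2 (by simp)
  · exact absurd h1 (by simp)

/-- Union of branches `a · f a` over a list of letters. -/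
def altList (f : α → PRE α) : List α → PRE α
  | [] => .empty
  | a :: l => .alt (.cat (.char a) (f a)) (altList f l)

lemma altList_lang (f : α → PRE α) (l : List α) (w : List α) :
    w ∈ (altList f l).lang ↔ ∃ a ∈ l, ∃ w', w = a :: w' ∧ w' ∈ (f a).lang := by
  induction l with
  | nil => simp [altList, PRE.lang]
  | cons a l ih =>
    simp only [altList, PRE.lang, Language.mem_add, ih, List.mem_cons]
    constructor
    · rintro (h | ⟨b, hb, w', rfl, hw'⟩)
      · rw [Language.mem_mul] at h
        obtain ⟨u, hu, b, hb, rfl⟩ := h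
        have hu' : u = [a] := hu
        subst hu'
        exact ⟨a, Or.inl rfl, b, rfl, hb⟩
      · exact ⟨b, Or.inr hb, w', rfl, hw'⟩
    · rintro ⟨b, hb | hb, w', rfl, hw'⟩
      · subst hb
        exact Or.inl (Language.mem_mul.mpr ⟨[b], rfl, w', hw', rfl⟩)
      · exact Or.inr ⟨b, hb, w', rfl, hw'⟩

lemma altList_markAux_lang (f : α → PRE α) (a : α) (l : List α) (c : α → ℕ) :
    ((altList f (a :: l)).markAux c).1.lang =
      ({[(a, c a + 1)]} : Language (α × ℕ)) * ((f a).markAux (fun b => if b = a then c a + 1 else c b)).1.lang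
        + ((altList f l).markAux ((f a).markAux (fun b => if b = a then c a + 1 else c b)).2).1.lang := rfl

lemma altList_mark_first (f : α → PRE α) (l : List α) (c : α → ℕ)
    (u : List (α × ℕ)) (hu : u ∈ ((altList f l).markAux c).1.lang) :
    ∃ b ∈ l, ∃ k u', u = (b, k) :: u' := by
  induction l generalizing c with
  | nil => exact absurd hu (by simp [altList, PRE.markAux, PRE.lang])
  | cons a l ih =>
    rw [altList_markAux_lang, Language.mem_add] at hu
    rcases hu with hu | hu
    · rw [Language.mem_mul] at hu
      obtain ⟨x, hx, b, hb, rfl⟩ := hu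
      have hx' : x = [(a, c a + 1)] := hx
      subst hx' 
      exact ⟨a, List.mem_cons_self, c a + 1, b, rfl⟩
    · obtain ⟨b, hb, k, u', rfl⟩ := ih _ hu
      exact ⟨b, List.mem_cons_of_mem a hb, k, u', rfl⟩

lemma singleton_mul_mem {x : α × ℕ} {L : Language (α × ℕ)} {u : List (α × ℕ)} :
    u ∈ ({[x]} : Language (α × ℕ)) * L ↔ ∃ t, u = x :: t ∧ t ∈ L := by
  rw [Language.mem_mul]
  constructor
  · rintro ⟨a, ha, b, hb, rfl⟩
    have ha' : a = [x] := ha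
    subst ha'
    exact ⟨b, rfl, hb⟩
  · rintro ⟨t, rfl, ht⟩
    exact ⟨[x], rfl, t, ht, rfl⟩

lemma altList_mark_det (f : α → PRE α) (l : List α)
    (hf : ∀ a ∈ l, DetL ((f a).mark.lang)) (hnd : l.Nodup) :
    ∀ c, DetL (((altList f l).markAux c).1.lang) := by
  induction l with
  | nil =>
    intro c w v v' a i j h1 _
    exact absurd h1 (by simp [altList, PRE.markAux, PRE.lang])
  | cons b l ih =>
    intro c w v v' a i j h1 h2
    have hdetb : DetL (((f b).markAux (fun x => if x = b then c b + 1 else c x)).1.lang) := by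
      rw [markAux_lang]
      exact DetL_image (hf b List.mem_cons_self)
    rw [altList_markAux_lang, Language.mem_add] at h1 h2
    have hbnl : b ∉ l := (List.nodup_cons.mp hnd).1
    rcases h1 with h1 | h1 <;> rcases h2 with h2 | h2
    · rw [singleton_mul_mem] at h1 h2
      obtain ⟨t1, he1, ht1⟩ := h1
      obtain ⟨t2, he2, ht2⟩ := h2
      cases w with
      | nil =>
        simp only [List.nil_append, List.cons.injEq] at he1 he2
        have hi : i = c b + 1 := (Prod.ext_iff.mp he1.1).2
        have hj : j = c b + 1 := (Prod.ext_iff.mp he2.1).2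
        omega
      | cons x w0 =>
        simp only [List.cons_append, List.cons.injEq] at he1 he2
        obtain ⟨rfl, he1⟩ := he1
        obtain ⟨-, he2⟩ := he2
        subst he1; subst he2
        exact hdetb w0 v v' a i j ht1 ht2
    · -- h1 in branch, h2 in rest: contradiction
      rw [singleton_mul_mem] at h1
      obtain ⟨t1, he1, -⟩ := h1
      obtain ⟨b2, hb2, k, u', he2⟩ := altList_mark_first f l _ _ h2
      exfalso
      cases w with
      | nil =>
        simp only [List.nil_append, List.cons.injEq] at he1 he2
        have h3 : a = b := congrArg Prod.fst he1.1
        have h4 : a = b2 := congrArg Prod.fst he2.1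
        exact hbnl (h3 ▸ h4 ▸ hb2)
      | cons x w0 =>
        simp only [List.cons_append, List.cons.injEq] at he1 he2
        have h3 : x = (b, c b + 1) := he1.1
        have h4 : x = (b2, k) := he2.1
        rw [h3] at h4
        have : b = b2 := congrArg Prod.fst h4
        exact hbnl (this ▸ hb2)
    · rw [singleton_mul_mem] at h2
      obtain ⟨t2, he2, -⟩ := h2
      obtain ⟨b2, hb2, k, u', he1⟩ := altList_mark_first f l _ _ h1
      exfalso
      cases w with
      | nil =>
        simp only [List.nil_append, List.cons.injEq] at he1 he2
        have h3 : a = b := congrArg Prod.fst he2.1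
        have h4 : a = b2 := congrArg Prod.fst he1.1
        exact hbnl (h3 ▸ h4 ▸ hb2)
      | cons x w0 =>
        simp only [List.cons_append, List.cons.injEq] at he1 he2
        have h3 : x = (b, c b + 1) := he2.1
        have h4 : x = (b2, k) := he1.1
        rw [h3] at h4
        have : b = b2 := congrArg Prod.fst h4
        exact hbnl (this ▸ hb2)
    · exact ih (fun a ha => hf a (List.mem_cons_of_mem b ha)) (List.nodup_cons.mp hnd).2 _ w v v' a i j h1 h2

/-- First letters of words in `S`. -/
def firsts (S : Finset (List α)) : Finset α :=
  S.biUnion fun w => w.head?.toFinset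

lemma mem_firsts {S : Finset (List α)} {a : α} :
    a ∈ firsts S ↔ ∃ w, a :: w ∈ S := by
  simp only [firsts, Finset.mem_biUnion, Option.mem_toFinset, Option.mem_def]
  constructor
  · rintro ⟨w, hw, hh⟩
    cases w with
    | nil => simp at hh
    | cons b w =>
      simp only [List.head?_cons, Option.some.injEq] at hh
      subst hh
      exact ⟨w, hw⟩
  · rintro ⟨w, hw⟩
    exact ⟨a :: w, hw, rfl⟩

/-- Words of `S` beginning with `a`, with that first letter removed. -/
def tailsOf (a : α) (S : Finset (List α)) : Finset (List α) :=
  (S.filter fun w => w.head? = some a).image List.tail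

lemma mem_tailsOf {a : α} {S : Finset (List α)} {w : List α} :
    w ∈ tailsOf a S ↔ a :: w ∈ S := by
  simp only [tailsOf, Finset.mem_image, Finset.mem_filter]
  constructor
  · rintro ⟨u, ⟨hu, hh⟩, rfl⟩
    cases u with
    | nil => simp at hh
    | cons b u =>
      simp only [List.head?_cons, Option.some.injEq] at hh
      subst hh
      exact hu
  · intro hw
    exact ⟨a :: w, ⟨hw, rfl⟩, rfl⟩

/-- Prefix-tree (trie) regular expression for `S`, with fuel `n`. -/
noncomputable def trie : ℕ → Finset (List α) → PRE α
  | 0, _ => .empty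
  | n + 1, S =>
    if [] ∈ S then .opt (altList (fun a => trie n (tailsOf a S)) (firsts S).toList)
    else altList (fun a => trie n (tailsOf a S)) (firsts S).toList

lemma trie_lang : ∀ (n : ℕ) (S : Finset (List α)), (∀ w ∈ S, w.length < n) →
    ∀ w, w ∈ (trie n S).lang ↔ w ∈ S := by
  intro n
  induction n with
  | zero =>
    intro S hS w
    simp only [trie, PRE.lang]
    constructor
    · intro h; exact absurd h (by simp)
    · intro h; exact absurd (hS w h) (by omega)
  | succ n ih =>
    intro S hS w
    have hcore : ∀ u, u ∈ (altList (fun a => trie n (tailsOf a S)) (firsts S).toList).lang ↔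
        (u ≠ [] ∧ u ∈ S) := by
      intro u
      rw [altList_lang]
      constructor
      · rintro ⟨a, ha, u', rfl, hu'⟩
        have hb : ∀ x ∈ tailsOf a S, x.length < n := by
          intro x hx
          have := hS (a :: x) (mem_tailsOf.mp hx)
          simpa using Nat.lt_of_succ_lt_succ (by simpa using this)
        rw [ih (tailsOf a S) hb] at hu'
        exact ⟨by simp, mem_tailsOf.mp hu'⟩
      · rintro ⟨hne, hu⟩
        cases u with
        | nil => exact absurd rfl hne
        | cons a u' =>
          refine ⟨a, Finset.mem_toList.mpr (mem_firsts.mpr ⟨u', hu⟩), u', rfl, ?_⟩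
          have hb : ∀ x ∈ tailsOf a S, x.length < n := by
            intro x hx
            have := hS (a :: x) (mem_tailsOf.mp hx)
            simpa using Nat.lt_of_succ_lt_succ (by simpa using this)
          rw [ih (tailsOf a S) hb]
          exact mem_tailsOf.mpr hu
    by_cases hnil : [] ∈ S
    · rw [show trie (n + 1) S
          = PRE.opt (altList (fun a => trie n (tailsOf a S)) (firsts S).toList) from by
        simp [trie, hnil]]
      simp only [PRE.lang, Language.mem_add, Language.mem_one, hcore]
      constructor
      · rintro (⟨-, h⟩ | rfl)
        · exact h
        · exact hnil
      · intro h
        cases w with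
        | nil => exact Or.inr rfl
        | cons a w' => exact Or.inl ⟨by simp, h⟩
    · rw [show trie (n + 1) S
          = altList (fun a => trie n (tailsOf a S)) (firsts S).toList from by
        simp [trie, hnil]]
      rw [hcore]
      constructor
      · rintro ⟨-, h⟩; exact h
      · intro h
        refine ⟨?_, h⟩
        rintro rfl
        exact hnil h

lemma trie_det : ∀ (n : ℕ) (S : Finset (List α)), DetL ((trie n S).mark.lang) := by
  intro n
  induction n with
  | zero =>
    intro S w v v' a i j h1 _
    exact absurd h1 (by simp [trie, PRE.mark, PRE.markAux, PRE.lang])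
  | succ n ih =>
    intro S
    have hdetcore : ∀ c, DetL (((altList (fun a => trie n (tailsOf a S)) (firsts S).toList).markAux c).1.lang) := by
      refine altList_mark_det _ _ (fun a _ => ih (tailsOf a S)) (Finset.nodup_toList _)
    by_cases hnil : [] ∈ S
    · have : (trie (n + 1) S).mark.lang =
        ((altList (fun a => trie n (tailsOf a S)) (firsts S).toList).markAux (fun _ => 0)).1.lang + 1 := by
        rw [show trie (n + 1) S
            = PRE.opt (altList (fun a => trie n (tailsOf a S)) (firsts S).toList) from by
          simp [trie, hnil]]
        rfl
      rw [DetL] at *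
      intro w v v' a i j h1 h2
      rw [this] at h1 h2
      exact DetL_add_one (hdetcore _) w v v' a i j h1 h2
    · have : (trie (n + 1) S).mark.lang =
        ((altList (fun a => trie n (tailsOf a S)) (firsts S).toList).markAux (fun _ => 0)).1.lang := by
        rw [show trie (n + 1) S
            = altList (fun a => trie n (tailsOf a S)) (firsts S).toList from by
          simp [trie, hnil]]
        rfl
      intro w v v' a i j h1 h2
      rw [this] at h1 h2
      exact hdetcore _ w v v' a i j h1 h2

end Aux

/-- Every non-empty finite language over a finite alphabet is the language of some
deterministic regular expression. -/
theorem stmt0 {α : Type} [Fintype α] [DecidableEq α]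
    (S : Finset (List α)) (hS : S.Nonempty) :
    ∃ r : PRE α, r.Deterministic ∧ ∀ w : List α, w ∈ r.lang ↔ w ∈ S := by
  refine ⟨trie (S.sup List.length + 1) S, ?_, ?_⟩
  · intro w v v' a i j h1 h2
    exact trie_det (S.sup List.length + 1) S w v v' a i j h1 h2
  · intro w
    refine trie_lang _ S ?_ w
    intro u hu
    exact Nat.lt_succ_of_le (Finset.le_sup hu)
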